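/- There is an injective map from the set of all maximal ideals of C(X) into the set of all maximal ideals of B₁(X); hence |𝓜(C(X))| ≤ |𝓜(B₁(X))|. -/

import Mathlib

open Filter Topology

def CFun (X : Type*) [TopologicalSpace X] : Subring (X → ℝ) where
  carrier := {f | Continuous f}
  one_mem' := continuous_const
  zero_mem' := continuous_const
  add_mem' := fun hf hg => hf.add hg
  mul_mem' := fun hf hg => hf.mul hg
  neg_mem' := fun hf => hf.neg

def B1 (X : Type*) [TopologicalSpace X] : Subring (X → ℝ) where
  carrier := {f | ∃ u : ℕ → C(X, ℝ), ∀ x, Tendsto (fun n => u n x) atTop (𝓝 (f x))}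
  one_mem' := ⟨fun _ => 1, fun _ => tendsto_const_nhds⟩
  zero_mem' := ⟨fun _ => 0, fun _ => tendsto_const_nhds⟩
  add_mem' := by
    rintro f g ⟨u, hu⟩ ⟨v, hv⟩
    exact ⟨fun n => u n + v n, fun x => (hu x).add (hv x)⟩
  mul_mem' := by
    rintro f g ⟨u, hu⟩ ⟨v, hv⟩
    exact ⟨fun n => u n * v n, fun x => (hu x).mul (hv x)⟩
  neg_mem' := by
    rintro f ⟨u, hu⟩
    exact ⟨fun n => -u n, fun x => (hu x).neg⟩

theorem CFun_le_B1 (X : Type*) [TopologicalSpace X] : CFun X ≤ B1 X :=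
  fun f hf => ⟨fun _ => ⟨f, hf⟩, fun _ => tendsto_const_nhds⟩

def inclB (X : Type*) [TopologicalSpace X] : CFun X →+* B1 X :=
  Subring.inclusion (CFun_le_B1 X)

def idealB {X : Type*} [TopologicalSpace X] (I : Ideal (CFun X)) : Set (B1 X) :=
  {f | ∃ u : ℕ → CFun X, (∀ n, u n ∈ I) ∧
    ∀ x, Tendsto (fun n => (u n : X → ℝ) x) atTop (𝓝 ((f : X → ℝ) x))}

def IsRealMax {X : Type*} [TopologicalSpace X] (M : Ideal (CFun X)) : Prop :=
  M.IsMaximal ∧ Nonempty ((CFun X ⧸ M) ≃+* ℝ)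

def IsRealMaxB {X : Type*} [TopologicalSpace X] (M : Ideal (B1 X)) : Prop :=
  M.IsMaximal ∧ Nonempty ((B1 X ⧸ M) ≃+* ℝ)

def evalC {X : Type*} [TopologicalSpace X] (p : X) : CFun X →+* ℝ :=
  (Pi.evalRingHom (fun _ => ℝ) p).comp (CFun X).subtype

def evalB {X : Type*} [TopologicalSpace X] (p : X) : B1 X →+* ℝ :=
  (Pi.evalRingHom (fun _ => ℝ) p).comp (B1 X).subtype

def constB1 {X : Type*} [TopologicalSpace X] (r : ℝ) : B1 X :=
  ⟨fun _ => r, ⟨fun _ => ContinuousMap.const X r, fun _ => tendsto_const_nhds⟩⟩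

theorem map_inclB_ne_top {X : Type*} [TopologicalSpace X] (M : Ideal (CFun X))
    (hM : M.IsMaximal) : Ideal.map (inclB X) M ≠ ⊤ := by
  intro htop
  have h1 : (1 : B1 X) ∈ Ideal.map (inclB X) M := htop ▸ Submodule.mem_top
  rw [Ideal.map, Ideal.span, Submodule.mem_span_set'] at h1
  obtain ⟨n, c, g, hsum⟩ := h1
  -- choose preimages in M
  have hpre : ∀ i : Fin n, ∃ m : CFun X, m ∈ M ∧ inclB X m = (g i : B1 X) := by
    intro i
    obtain ⟨m, hm, hmeq⟩ := (g i).2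
    exact ⟨m, hm, hmeq⟩
  choose m hmM hmeq using hpre
  -- the sum of squares
  set G : CFun X := ∑ i : Fin n, m i * m i with hG
  have hGM : G ∈ M := Ideal.sum_mem M (fun i _ => Ideal.mul_mem_left M _ (hmM i))
  -- G vanishes nowhere
  have hGpos : ∀ x : X, (G : X → ℝ) x ≠ 0 := by
    intro x
    have hx := congrArg (evalB x) hsum
    rw [map_sum, map_one] at hx
    -- some term is nonzero
    have hex : ∃ i : Fin n, evalB x (g i : B1 X) ≠ 0 := by
      by_contra hall
      push_neg at hall
      apply one_ne_zero (α := ℝ)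
      rw [← hx]
      refine Finset.sum_eq_zero (fun i _ => ?_)
      rw [smul_eq_mul, map_mul, hall i, mul_zero]
    obtain ⟨i, hi⟩ := hex
    have hmi : evalC x (m i) ≠ 0 := by
      have : evalB x (inclB X (m i)) = evalC x (m i) := rfl
      rw [hmeq i] at this
      rwa [← this]
    have hval : (G : X → ℝ) x = ∑ j : Fin n, (evalC x (m j)) * (evalC x (m j)) := by
      have : evalC x G = ∑ j : Fin n, evalC x (m j * m j) := by
        rw [hG, map_sum]
      have h' : evalC x G = ∑ j : Fin n, (evalC x (m j)) * (evalC x (m j)) := by simpa [map_mul] using this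
      exact h'
    rw [hval]
    have hpos : 0 < ∑ j : Fin n, (evalC x (m j)) * (evalC x (m j)) := by
      exact Finset.sum_pos' (fun j _ => mul_self_nonneg _)
        ⟨i, Finset.mem_univ i, mul_self_pos.mpr hmi⟩
    exact ne_of_gt hpos
  -- hence G is a unit in CFun X
  have hGunit : IsUnit G := by
    have hcont : Continuous (G : X → ℝ) := G.2
    refine IsUnit.of_mul_eq_one (a := G) ⟨fun x => ((G : X → ℝ) x)⁻¹, hcont.inv₀ hGpos⟩ ?_
    ext x
    exact mul_inv_cancel₀ (hGpos x)
  exact hM.ne_top (Ideal.eq_top_of_isUnit_mem M hGM hGunit)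

theorem maximal_ideals_inject {X : Type*} [TopologicalSpace X] :
    ∃ Φ : {M : Ideal (CFun X) // M.IsMaximal} → {N : Ideal (B1 X) // N.IsMaximal},
      Function.Injective Φ := by
  have key : ∀ M : {M : Ideal (CFun X) // M.IsMaximal},
      ∃ N : Ideal (B1 X), N.IsMaximal ∧ Ideal.map (inclB X) M.1 ≤ N := by
    intro M
    obtain ⟨N, hN, hle⟩ := Ideal.exists_le_maximal _ (map_inclB_ne_top M.1 M.2)
    exact ⟨N, hN, hle⟩
  choose N hN hle using key
  refine ⟨fun M => ⟨N M, hN M⟩, ?_⟩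
  intro M₁ M₂ h
  have hNeq : N M₁ = N M₂ := congrArg Subtype.val h
  have hc : ∀ M : {M : Ideal (CFun X) // M.IsMaximal},
      M.1 = Ideal.comap (inclB X) (N M) := by
    intro M
    have h1 : M.1 ≤ Ideal.comap (inclB X) (N M) :=
      Ideal.map_le_iff_le_comap.mp (hle M)
    have h2 : Ideal.comap (inclB X) (N M) ≠ ⊤ :=
      Ideal.comap_ne_top _ (hN M).ne_top
    exact ((M.2.eq_of_le h2 h1)).symm ▸ rfl
  have : M₁.1 = M₂.1 := by
    rw [hc M₁, hc M₂, hNeq]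
  exact Subtype.ext this
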